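/- Under the hypotheses of the preceding limit lemma (namely $(v_n)\in\mathcal{GS}(v^*)$, $(\beta_n)\in\mathcal{GS}(-\beta)$ with $\beta\in(1/2,1]$, $\beta_n\in(0,1)$, $\xi=\lim (n\beta_n)^{-1}$ finite, $m-v^*\xi>0$), for every positive sequence $(\alpha_n)$ with $\lim_{n\to\infty}\alpha_n=0$ and every $\delta\in\mathbb{R}$, one has $\lim_{n\to\infty} v_n Q_n^m\left[\sum_{k=1}^n Q_k^{-m}\frac{\beta_k}{v_k}\alpha_k+\delta\right]=0$. -/

import Mathlib

open Filter Finset Real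

def GS (γ : ℝ) (v : ℕ → ℝ) : Prop :=
  (∀ n, 0 < v n) ∧
    Tendsto (fun n : ℕ => (n : ℝ) * (1 - v (n - 1) / v n)) atTop (nhds γ)

lemma sum_Ioc_telescope (f : ℕ → ℝ) (N : ℕ) : ∀ n, N ≤ n →
    ∑ k ∈ Ioc N n, (f k - f (k-1)) = f n - f N := by
  intro n hn
  induction n, hn using Nat.le_induction with
  | base => simp
  | succ n hn ih =>
      rw [Finset.sum_Ioc_succ_top hn, ih]
      have : n + 1 - 1 = n := rfl
      rw [this]; ring

lemma harmonic_Ioc (N : ℕ) :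
    Tendsto (fun n : ℕ => ∑ k ∈ Ioc N n, (k:ℝ)⁻¹) atTop atTop := by
  have h0 : Tendsto (fun n : ℕ => ∑ k ∈ Ioc 0 n, (k:ℝ)⁻¹) atTop atTop := by
    have heq : ∀ n : ℕ, ∑ k ∈ Ioc 0 n, (k:ℝ)⁻¹ = ∑ i ∈ range n, 1/((i:ℝ)+1) := by
      intro n
      induction n with
      | zero => simp
      | succ n ih =>
          rw [Finset.sum_Ioc_succ_top (Nat.zero_le n), ih, Finset.sum_range_succ]
          push_cast; rw [one_div]
    exact Tendsto.congr (fun n => (heq n).symm) Real.tendsto_sum_range_one_div_nat_succ_atTop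
  have heq : ∀ᶠ n : ℕ in atTop, (∑ k ∈ Ioc 0 n, (k:ℝ)⁻¹) + (-∑ k ∈ Ioc 0 N, (k:ℝ)⁻¹)
      = ∑ k ∈ Ioc N n, (k:ℝ)⁻¹ := by
    filter_upwards [eventually_ge_atTop N] with n hn
    rw [← Finset.sum_Ioc_consecutive _ (Nat.zero_le N) hn]; ring
  exact Tendsto.congr' heq (tendsto_atTop_add_const_right atTop _ h0)

lemma div_compare (r : ℕ → ℝ) (C : ℝ) (hC : 0 < C) (N : ℕ)
    (h : ∀ k, N < k → C * (k:ℝ)⁻¹ ≤ r k) :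
    Tendsto (fun n : ℕ => ∑ k ∈ Ioc N n, r k) atTop atTop := by
  refine tendsto_atTop_mono ?_ ((harmonic_Ioc N).const_mul_atTop hC)
  intro n
  rw [Finset.mul_sum]
  exact Finset.sum_le_sum (fun k hk => h k (Finset.mem_Ioc.mp hk).1)

lemma decay_lemma (f r : ℕ → ℝ) (hf : ∀ n, 0 < f n) (N : ℕ)
    (hstep : ∀ n, N < n → f n ≤ f (n-1) * Real.exp (-r n))
    (hdiv : Tendsto (fun n : ℕ => ∑ k ∈ Ioc N n, r k) atTop atTop) :
    Tendsto f atTop (nhds 0) := by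
  have key : ∀ n, N ≤ n → f n ≤ f N * Real.exp (-(∑ k ∈ Ioc N n, r k)) := by
    intro n hn
    induction n, hn using Nat.le_induction with
    | base => simp
    | succ n hn ih =>
        have h1 := hstep (n+1) (by omega)
        have he : n + 1 - 1 = n := rfl
        rw [he] at h1
        calc f (n+1) ≤ f n * Real.exp (-r (n+1)) := h1
          _ ≤ (f N * Real.exp (-(∑ k ∈ Ioc N n, r k))) * Real.exp (-r (n+1)) :=
              mul_le_mul_of_nonneg_right ih (Real.exp_pos _).le
          _ = f N * Real.exp (-(∑ k ∈ Ioc N (n+1), r k)) := by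
              rw [Finset.sum_Ioc_succ_top hn, mul_assoc, ← Real.exp_add]; ring_nf
  have hub : Tendsto (fun n : ℕ => f N * Real.exp (-(∑ k ∈ Ioc N n, r k))) atTop (nhds 0) := by
    have h2 : Tendsto (fun n : ℕ => Real.exp (-(∑ k ∈ Ioc N n, r k))) atTop (nhds 0) :=
      Real.tendsto_exp_atBot.comp (tendsto_neg_atBot_iff.mpr hdiv)
    simpa using h2.const_mul (f N)
  refine tendsto_of_tendsto_of_tendsto_of_le_of_le' tendsto_const_nhds hub
    (Eventually.of_forall fun n => (hf n).le) ?_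
  filter_upwards [eventually_ge_atTop N] with n hn using key n hn

lemma slope_limit (m : ℝ) (β : ℕ → ℝ) (hβpos : ∀ n, 0 < β n)
    (hβ0 : Tendsto β atTop (nhds 0)) :
    Tendsto (fun n => (1 - (1 - β n) ^ m) / β n) atTop (nhds m) := by
  have hderiv : HasDerivAt (fun x : ℝ => (1 - x) ^ m) (-m) 0 := by
    have h1 : HasDerivAt (fun x : ℝ => 1 - x) (-1) 0 := by
      simpa using (hasDerivAt_id (0:ℝ)).const_sub 1
    have h2 : HasDerivAt (fun y : ℝ => y ^ m) (m * (1:ℝ) ^ (m-1)) ((fun x : ℝ => 1 - x) 0) := by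
      simpa using (Real.hasDerivAt_rpow_const (x := (1:ℝ)) (p := m) (Or.inl one_ne_zero))
    have h3 := h2.comp 0 h1
    simpa [Function.comp_def] using h3
  have hs := hasDerivAt_iff_tendsto_slope.mp hderiv
  have hβ0' : Tendsto β atTop (nhdsWithin 0 {(0:ℝ)}ᶜ) := by
    refine tendsto_nhdsWithin_iff.mpr ⟨hβ0, ?_⟩
    exact Eventually.of_forall fun n => (hβpos n).ne'
  have h4 := (hs.comp hβ0').neg
  rw [neg_neg] at h4
  refine Tendsto.congr ?_ h4
  intro n
  have hne := (hβpos n).ne'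
  rw [Function.comp_apply, slope_def_field]
  have h1 : ((1:ℝ) - 0) ^ m = 1 := by norm_num
  rw [h1, sub_zero, ← neg_div, neg_sub]

theorem lemma1_part2 (v β α : ℕ → ℝ) (vstar b ξ m δ : ℝ)
    (hv : GS vstar v) (hβ : GS (-b) β) (hb : b ∈ Set.Ioc (1/2 : ℝ) 1)
    (hβ01 : ∀ n, β n ∈ Set.Ioo (0 : ℝ) 1)
    (hξ : Tendsto (fun n : ℕ => ((n : ℝ) * β n)⁻¹) atTop (nhds ξ))
    (hm : 0 < m) (hmv : 0 < m - vstar * ξ)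
    (hα : ∀ n, 0 < α n) (hα0 : Tendsto α atTop (nhds 0))
    (Q : ℕ → ℝ) (hQ : ∀ n, Q n = ∏ j ∈ Icc 1 n, (1 - β j)) :
    Tendsto (fun n : ℕ =>
        v n * Q n ^ m * ((∑ k ∈ Icc 1 n, Q k ^ (-m) * (β k / v k) * α k) + δ))
      atTop (nhds 0) := by
  obtain ⟨hvpos, hvlim⟩ := hv
  obtain ⟨-, hβlim⟩ := hβ
  have hβpos : ∀ n, 0 < β n := fun n => (hβ01 n).1
  have hβlt : ∀ n, β n < 1 := fun n => (hβ01 n).2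
  have hb0 : 0 < b := lt_trans (by norm_num) hb.1
  have hQpos : ∀ n, 0 < Q n := by
    intro n; rw [hQ]
    exact Finset.prod_pos (fun j _ => by linarith [hβlt j])
  set w : ℕ → ℝ := fun n => v n * Q n ^ m with hwdef
  have hwpos : ∀ n, 0 < w n :=
    fun n => mul_pos (hvpos n) (Real.rpow_pos_of_pos (hQpos n) m)
  set c := m - vstar * ξ with hcdef
  have hc : 0 < c := hmv
  -- β tends to 0
  have hβ0 : Tendsto β atTop (nhds 0) := by
    obtain ⟨N, hN⟩ := eventually_atTop.mp
      ((hβlim.eventually_lt_const (show -b < -b/2 by linarith)).and (eventually_ge_atTop 1))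
    refine decay_lemma β (fun n => Real.log (1 + b/(2*n))) hβpos N ?_ ?_
    · intro n hn
      obtain ⟨hs, hn1⟩ := hN n hn.le
      have hnR : (0:ℝ) < n := by exact_mod_cast hn1
      have hx : (0:ℝ) < 1 + b/(2*n) := by positivity
      rw [Real.exp_neg, Real.exp_log hx]
      have h1 : 1 - β (n-1)/β n < -b/2 / (n:ℝ) :=
        (lt_div_iff₀ hnR).mpr (by linarith [hs])
      have he : -b/2 / (n:ℝ) = -(b/(2*n)) := by ring
      rw [he] at h1
      have h2 : (1 + b/(2*(n:ℝ))) * β n < β (n-1) :=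
        (lt_div_iff₀ (hβpos n)).mp (by linarith)
      rw [← div_eq_mul_inv, le_div_iff₀ hx]
      linarith
    · refine div_compare _ (b/(b+2)) (by positivity) N ?_
      intro k hk
      obtain ⟨-, hk1⟩ := hN k hk.le
      have hkR : (0:ℝ) < k := by exact_mod_cast hk1
      have hx : (0:ℝ) < 1 + b/(2*k) := by positivity
      have hlog : 1 - (1 + b/(2*(k:ℝ)))⁻¹ ≤ Real.log (1 + b/(2*k)) := by
        have h5 := Real.log_le_sub_one_of_pos (inv_pos.mpr hx)
        rw [Real.log_inv] at h5; linarith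
      have h3 : (1:ℝ) - (1 + b/(2*(k:ℝ)))⁻¹ = b/(2*k+b) := by
        rw [eq_div_iff (by positivity : (2*(k:ℝ)+b) ≠ 0)]
        field_simp
        ring
      rw [h3] at hlog
      have h4 : b/(b+2) * (k:ℝ)⁻¹ ≤ b/(2*k+b) := by
        have hk1' : (1:ℝ) ≤ (k:ℝ) := by exact_mod_cast hk1
        rw [← div_eq_mul_inv, div_div, div_le_div_iff₀ (by positivity) (by positivity)]
        nlinarith [mul_nonneg (mul_nonneg hb0.le hb0.le) (sub_nonneg.mpr hk1')]
      linarith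
  -- ξ nonneg and lower bound on β
  have hξ0 : 0 ≤ ξ := by
    refine ge_of_tendsto' hξ fun n => ?_
    exact inv_nonneg.mpr (mul_nonneg (Nat.cast_nonneg n) (hβpos n).le)
  have hβlb : ∀ᶠ n : ℕ in atTop, (ξ+1)⁻¹ * (n:ℝ)⁻¹ ≤ β n := by
    filter_upwards [hξ.eventually_lt_const (show ξ < ξ+1 by linarith),
      eventually_ge_atTop 1] with n h1 hn1
    have hnR : (0:ℝ) < n := by exact_mod_cast hn1
    have hp : 0 < (n:ℝ) * β n := mul_pos hnR (hβpos n)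
    have h2 : 1 < (ξ+1) * ((n:ℝ) * β n) := by
      have h3 := mul_lt_mul_of_pos_right h1 hp
      rwa [inv_mul_cancel₀ hp.ne'] at h3
    have h4 : 0 < (ξ+1)⁻¹ * (n:ℝ)⁻¹ := by positivity
    have h5 := mul_lt_mul_of_pos_left h2 h4
    have hξ1 : (ξ+1) ≠ 0 := by positivity
    calc (ξ+1)⁻¹ * (n:ℝ)⁻¹ = (ξ+1)⁻¹ * (n:ℝ)⁻¹ * 1 := by ring
      _ ≤ (ξ+1)⁻¹ * (n:ℝ)⁻¹ * ((ξ+1) * ((n:ℝ) * β n)) := h5.le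
      _ = β n := by field_simp
  -- ratio identity for w
  have hwr : ∀ n : ℕ, 1 ≤ n → w n / w (n-1) = (v n / v (n-1)) * (1 - β n) ^ m := by
    intro n hn
    obtain ⟨k, rfl⟩ : ∃ k, n = k + 1 := ⟨n - 1, by omega⟩
    have hQr : Q (k+1) = Q k * (1 - β (k+1)) := by
      rw [hQ (k+1), hQ k, Finset.prod_Icc_succ_top (Nat.le_add_left 1 k)]
    have h1 : (0:ℝ) ≤ Q k := (hQpos k).le
    have h2 : (0:ℝ) ≤ 1 - β (k+1) := by linarith [hβlt (k+1)]
    show w (k+1) / w k = v (k+1) / v k * (1 - β (k+1)) ^ m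
    simp only [hwdef]
    rw [hQr, Real.mul_rpow h1 h2]
    have hvk := (hvpos k).ne'
    have hQk := (Real.rpow_pos_of_pos (hQpos k) m).ne'
    field_simp
  -- main ratio limit
  have hT : Tendsto (fun n : ℕ => (1 - w n / w (n-1)) / β n) atTop (nhds c) := by
    have hninv : Tendsto (fun n : ℕ => ((n:ℝ))⁻¹) atTop (nhds 0) :=
      tendsto_inv_atTop_zero.comp tendsto_natCast_atTop_atTop
    have hd : Tendsto (fun n : ℕ => ((n:ℝ) * (1 - v (n-1)/v n)) * ((n:ℝ))⁻¹)
        atTop (nhds 0) := by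
      simpa using hvlim.mul hninv
    have hratio : Tendsto (fun n : ℕ => v (n-1) / v n) atTop (nhds 1) := by
      have h1 : Tendsto (fun n : ℕ => 1 - ((n:ℝ) * (1 - v (n-1)/v n)) * ((n:ℝ))⁻¹)
          atTop (nhds 1) := by
        simpa using (tendsto_const_nhds (x := (1:ℝ)) (f := atTop)).sub hd
      refine Tendsto.congr' ?_ h1
      filter_upwards [eventually_ge_atTop 1] with n hn
      have hnR : ((n:ℝ)) ≠ 0 := Nat.cast_ne_zero.mpr (by omega)
      field_simp
      ring
    have hinv : Tendsto (fun n : ℕ => v n / v (n-1)) atTop (nhds 1) := by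
      have h2 := hratio.inv₀ one_ne_zero
      rw [inv_one] at h2
      refine Tendsto.congr (fun n => ?_) h2
      rw [inv_div]
    have hg := slope_limit m β hβpos hβ0
    have hmain := (hg.sub (hvlim.mul hξ)).mul hinv
    rw [mul_one] at hmain
    rw [hcdef]
    refine Tendsto.congr' ?_ hmain
    filter_upwards [eventually_ge_atTop 1] with n hn
    have h1 := hwr n hn
    have hβne := (hβpos n).ne'
    have hvne := (hvpos n).ne'
    have hv'ne := (hvpos (n-1)).ne'
    have hnne : ((n:ℝ)) ≠ 0 := Nat.cast_ne_zero.mpr (by omega)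
    rw [h1]
    field_simp
    ring
  -- w tends to 0
  have hw0 : Tendsto w atTop (nhds 0) := by
    obtain ⟨N, hN⟩ := eventually_atTop.mp
      ((hT.eventually_const_lt (show c/2 < c by linarith)).and
        (hβlb.and (eventually_ge_atTop 1)))
    refine decay_lemma w (fun n => c/2 * β n) hwpos N ?_ ?_
    · intro n hn
      obtain ⟨h1, h2, h3⟩ := hN n hn.le
      have h4 : c/2 * β n ≤ 1 - w n / w (n-1) := (le_div_iff₀ (hβpos n)).mp h1.le
      have h5 : w n / w (n-1) ≤ Real.exp (-(c/2 * β n)) := by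
        have h6 := Real.add_one_le_exp (-(c/2 * β n))
        linarith
      calc w n = w n / w (n-1) * w (n-1) := by
            rw [div_mul_cancel₀ _ (hwpos (n-1)).ne']
        _ ≤ Real.exp (-(c/2*β n)) * w (n-1) :=
            mul_le_mul_of_nonneg_right h5 (hwpos _).le
        _ = w (n-1) * Real.exp (-(c/2*β n)) := mul_comm _ _
    · refine div_compare _ (c/2 * (ξ+1)⁻¹) (by positivity) N ?_
      intro k hk
      obtain ⟨-, h2, -⟩ := hN k hk.le
      calc c/2 * (ξ+1)⁻¹ * (k:ℝ)⁻¹ = c/2 * ((ξ+1)⁻¹ * (k:ℝ)⁻¹) := by ring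
        _ ≤ c/2 * β k := mul_le_mul_of_nonneg_left h2 (by positivity)
  -- the weighted sum tends to 0
  have hwS : Tendsto (fun n : ℕ =>
      w n * (∑ k ∈ Icc 1 n, Q k ^ (-m) * (β k / v k) * α k)) atTop (nhds 0) := by
    rw [Metric.tendsto_atTop]
    intro ε hε
    have hεc : 0 < ε * c / 8 := by positivity
    obtain ⟨N₁, hN₁⟩ := eventually_atTop.mp
      ((hT.eventually_const_lt (show c/2 < c by linarith)).and
        ((hα0.eventually_lt_const hεc).and (eventually_ge_atTop 1)))
    set S : ℕ → ℝ := fun n => ∑ k ∈ Icc 1 n, Q k ^ (-m) * (β k / v k) * α k with hS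
    have hu : ∀ k : ℕ, Q k ^ (-m) * (β k / v k) * α k = α k * (β k / w k) := by
      intro k
      rw [Real.rpow_neg (hQpos k).le]
      simp only [hwdef]
      have hvk := (hvpos k).ne'
      have hQk := (Real.rpow_pos_of_pos (hQpos k) m).ne'
      field_simp
    have hupos : ∀ k, 0 ≤ Q k ^ (-m) * (β k / v k) * α k := by
      intro k
      have h1 := Real.rpow_pos_of_pos (hQpos k) (-m)
      have h2 := hβpos k; have h3 := hvpos k; have h4 := hα k
      positivity
    have hSpos : ∀ n, 0 ≤ S n := fun n => Finset.sum_nonneg fun k _ => hupos k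
    have hterm : ∀ k, N₁ < k → Q k ^ (-m) * (β k / v k) * α k
        ≤ ε/4 * ((w k)⁻¹ - (w (k-1))⁻¹) := by
      intro k hk
      obtain ⟨h1, h2, h3⟩ := hN₁ k hk.le
      have hwk := hwpos k
      have hwk' := hwpos (k-1)
      have h4 : c/2 * β k ≤ 1 - w k / w (k-1) := (le_div_iff₀ (hβpos k)).mp h1.le
      have h5 : (w k)⁻¹ - (w (k-1))⁻¹ = (1 - w k / w (k-1)) / w k := by
        field_simp
      rw [hu k, h5]
      calc α k * (β k / w k) ≤ (ε * c/8) * (β k / w k) :=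
            mul_le_mul_of_nonneg_right h2.le (div_nonneg (hβpos k).le hwk.le)
        _ = ε/4 * ((c/2 * β k)/w k) := by ring
        _ ≤ ε/4 * ((1 - w k/w (k-1))/w k) := by
            have hε4 : (0:ℝ) ≤ ε/4 := by positivity
            exact mul_le_mul_of_nonneg_left (by gcongr) hε4
    have hkey : ∀ n, N₁ ≤ n → w n * S n ≤ w n * S N₁ + ε/4 := by
      intro n hn
      have hsplit : S n = S N₁ + ∑ k ∈ Ioc N₁ n, Q k ^ (-m) * (β k / v k) * α k := by
        simp only [hS]
        rw [show Icc 1 n = Ioc 0 n from Finset.Icc_add_one_left_eq_Ioc 0 n, show Icc 1 N₁ = Ioc 0 N₁ from Finset.Icc_add_one_left_eq_Ioc 0 N₁,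
          ← Finset.sum_Ioc_consecutive _ (Nat.zero_le N₁) hn]
      have hsum : ∑ k ∈ Ioc N₁ n, Q k ^ (-m) * (β k / v k) * α k
          ≤ ε/4 * ((w n)⁻¹ - (w N₁)⁻¹) := by
        calc ∑ k ∈ Ioc N₁ n, Q k ^ (-m) * (β k / v k) * α k
            ≤ ∑ k ∈ Ioc N₁ n, ε/4 * ((w k)⁻¹ - (w (k-1))⁻¹) :=
              Finset.sum_le_sum fun k hk => hterm k (Finset.mem_Ioc.mp hk).1
          _ = ε/4 * ∑ k ∈ Ioc N₁ n, ((fun j => (w j)⁻¹) k - (fun j => (w j)⁻¹) (k-1)) := by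
              rw [Finset.mul_sum]
          _ = ε/4 * ((w n)⁻¹ - (w N₁)⁻¹) := by
              rw [sum_Ioc_telescope (fun j => (w j)⁻¹) N₁ n hn]
      have hwn := hwpos n
      have hwN := hwpos N₁
      have h8 : w n * (ε/4 * ((w n)⁻¹ - (w N₁)⁻¹)) ≤ ε/4 := by
        have h9 : w n * (w n)⁻¹ = 1 := mul_inv_cancel₀ hwn.ne'
        have h10 : (0:ℝ) ≤ ε/4 * (w n * (w N₁)⁻¹) := by positivity
        have h11 : w n * (ε/4 * ((w n)⁻¹ - (w N₁)⁻¹))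
            = ε/4 * (w n * (w n)⁻¹) - ε/4 * (w n * (w N₁)⁻¹) := by ring
        rw [h11, h9]
        linarith
      calc w n * S n
          = w n * S N₁ + w n * (∑ k ∈ Ioc N₁ n, Q k ^ (-m) * (β k / v k) * α k) := by
            rw [hsplit]; ring
        _ ≤ w n * S N₁ + w n * (ε/4 * ((w n)⁻¹ - (w N₁)⁻¹)) := by
            have h10 := mul_le_mul_of_nonneg_left hsum hwn.le
            linarith
        _ ≤ w n * S N₁ + ε/4 := by linarith
    have hw0S : Tendsto (fun n : ℕ => w n * S N₁) atTop (nhds 0) := by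
      have h11 := hw0.mul_const (S N₁)
      rwa [zero_mul] at h11
    obtain ⟨N₂, hN₂⟩ := eventually_atTop.mp
      (hw0S.eventually_lt_const (show (0:ℝ) < ε/4 by positivity))
    refine ⟨max N₁ N₂, fun n hn => ?_⟩
    have hn1 : N₁ ≤ n := le_trans (le_max_left _ _) hn
    have hn2 : N₂ ≤ n := le_trans (le_max_right _ _) hn
    rw [dist_zero_right, Real.norm_eq_abs,
      abs_of_nonneg (mul_nonneg (hwpos n).le (hSpos n))]
    have h12 := hkey n hn1
    have h13 := hN₂ n hn2
    have h14 : (0:ℝ) < ε/4 := by positivity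
    linarith
  have hfinal := hwS.add (hw0.mul_const δ)
  rw [show (0:ℝ) + 0 * δ = 0 by ring] at hfinal
  refine Tendsto.congr (fun n => ?_) hfinal
  simp only [hwdef]; ring
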